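/- arXiv:1605.03016 — 3 statements merged into one kernel-verified Lean document; each statement's English description precedes it below -/
import Mathlib

section
/- Let X be a topological space, Y a convex set in a topological vector space, and Z a nonempty set. Let P : X → 2^Z, Q : Y → 2^Z and T : Y → 2^X be correspondences satisfying: (a) there exists y_0 ∈ Y such that P(x) ∩ Q(y_0) ≠ ∅ for each x ∈ X; (b) T ∈ KKM(Y,X) is compact. Then there exist n ∈ ℕ with n ≥ 2, points y_1*,…,y_n* ∈ Y, a point y* ∈ co{y_1*,…,y_n*}, and x* ∈ T(y*) such that P(x*) ∩ Q(y_i*) ≠ ∅ for each i ∈ {1,…,n}. -/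
open Set

/-- `G` is a generalized KKM mapping with respect to `T`: for every nonempty
finite subset `A` of `Y`, `⋃_{y ∈ co A} T(y) ⊆ ⋃_{a ∈ A} G(a)`. -/
def IsGenKKM {V X : Type*} [AddCommGroup V] [Module ℝ V]
    (Y : Set V) (T G : V → Set X) : Prop :=
  ∀ A : Finset V, A.Nonempty → (A : Set V) ⊆ Y →
    ∀ y ∈ convexHull ℝ (A : Set V), T y ⊆ ⋃ a ∈ A, G a

/-- `T ∈ KKM(Y,X)`: for every correspondence `G` that is a generalized KKM
mapping w.r.t. `T`, the family `{cl G(y) : y ∈ Y}` has the finite intersection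
property. -/
def HasKKMProperty {V X : Type*} [AddCommGroup V] [Module ℝ V] [TopologicalSpace X]
    (Y : Set V) (T : V → Set X) : Prop :=
  ∀ G : V → Set X, IsGenKKM Y T G →
    ∀ B : Finset V, B.Nonempty → (B : Set V) ⊆ Y →
      (⋂ y ∈ B, closure (G y)).Nonempty

/-- Theorem 9: a coincidence-like theorem. -/
theorem statement8 {X V Z : Type*} [TopologicalSpace X]
    [AddCommGroup V] [Module ℝ V] [TopologicalSpace V]
    [IsTopologicalAddGroup V] [ContinuousSMul ℝ V]
    [Nonempty Z]
    (Y : Set V) (hYcv : Convex ℝ Y)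
    (P : X → Set Z) (Q : V → Set Z) (T : V → Set X)
    -- (a) there exists y₀ ∈ Y such that P(x) ∩ Q(y₀) ≠ ∅ for each x ∈ X
    (ha : ∃ y₀ ∈ Y, ∀ x : X, (P x ∩ Q y₀).Nonempty)
    -- (b) T ∈ KKM(Y,X) is compact
    (hb₁ : HasKKMProperty Y T)
    (hb₂ : IsCompact (closure (⋃ y ∈ Y, T y))) :
    ∃ n : ℕ, 2 ≤ n ∧ ∃ ys : Fin n → V, (∀ i, ys i ∈ Y) ∧
      ∃ ystar ∈ convexHull ℝ (Set.range ys), ∃ xstar ∈ T ystar,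
        ∀ i, (P xstar ∩ Q (ys i)).Nonempty := by
  obtain ⟨y₀, hy₀Y, hy₀⟩ := ha
  by_contra hcon
  push_neg at hcon
  -- define G
  set G : V → Set X := fun y => {x | ¬ (P x ∩ Q y).Nonempty} with hG
  have hGenKKM : IsGenKKM Y T G := by
    intro A hA hAY y hy x hx
    obtain ⟨a, haA⟩ := hA
    -- enumerate A
    set n := A.card + 2 with hn
    have hn2 : 2 ≤ n := by omega
    set ys : Fin n → V := fun i =>
      if h : (i : ℕ) < A.card then (A.equivFin.symm ⟨i, h⟩ : V) else a with hys
    have hysY : ∀ i, ys i ∈ Y := by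
      intro i
      simp only [hys]
      split
      · exact hAY (A.equivFin.symm _).2
      · exact hAY haA
    have hrange : Set.range ys = (A : Set V) := by
      ext v
      constructor
      · rintro ⟨i, rfl⟩
        simp only [hys]
        split
        · exact (A.equivFin.symm _).2
        · exact haA
      · intro hv
        refine ⟨⟨(A.equivFin ⟨v, hv⟩ : ℕ), ?_⟩, ?_⟩
        · have := (A.equivFin ⟨v, hv⟩).2
          omega
        · simp only [hys]
          have hlt : ((A.equivFin ⟨v, hv⟩ : ℕ)) < A.card := (A.equivFin ⟨v, hv⟩).2
          rw [dif_pos hlt]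
          simp
    have := hcon n hn2 ys hysY y (by rw [hrange]; exact hy) x hx
    obtain ⟨i, hi⟩ := this
    have hmem : ys i ∈ A := by
      have : ys i ∈ Set.range ys := ⟨i, rfl⟩
      rwa [hrange] at this
    exact Set.mem_biUnion hmem (by simp [hG, Set.not_nonempty_iff_eq_empty, hi])
  have hne := hb₁ G hGenKKM {y₀} ⟨y₀, Finset.mem_singleton_self y₀⟩
    (by simpa using hy₀Y)
  simp only [Finset.mem_singleton, Set.iInter_iInter_eq_left] at hne
  have hGempty : G y₀ = ∅ := by
    ext x
    simp only [hG, Set.mem_setOf_eq, Set.mem_empty_iff_false, iff_false, not_not]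
    exact hy₀ x
  rw [hGempty, closure_empty] at hne
  exact hne.ne_empty rfl
end

section
/- Let X be a topological space, Y a convex set in a topological vector space, and Z a nonempty set. Let P : X → 2^Z, Q : Y → 2^Z and T : Y → 2^X be correspondences satisfying: (a) T is properly quasi-convex w.r.t. G, where G : Y → 2^X is defined by G(y) = {x ∈ X : P(x) ∩ Q(y) = ∅}; (b) T ∈ KKM(Y,X) is compact. Then for each y ∈ Y there exists x_0 ∈ X such that P(x_0) ∩ Q(y) = ∅. -/
open Set

/-- Theorem 10: existence of elements `x₀` with `P(x₀) ∩ Q(y) = ∅`. -/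
theorem statement9 {X V Z : Type*} [TopologicalSpace X]
    [AddCommGroup V] [Module ℝ V] [TopologicalSpace V]
    [IsTopologicalAddGroup V] [ContinuousSMul ℝ V]
    [Nonempty Z]
    (Y : Set V) (hYcv : Convex ℝ Y)
    (P : X → Set Z) (Q : V → Set Z) (T : V → Set X)
    -- G(y) = {x ∈ X : P(x) ∩ Q(y) = ∅}
    (G : V → Set X) (hG : ∀ y, G y = {x : X | P x ∩ Q y = ∅})
    -- (a) T is properly quasi-convex w.r.t. G
    (ha : ∀ n : ℕ, 2 ≤ n → ∀ ys : Fin n → V, (∀ i, ys i ∈ Y) →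
      ∀ y ∈ convexHull ℝ (Set.range ys), ∃ i, T y ⊆ G (ys i))
    -- (b) T ∈ KKM(Y,X) is compact
    (hb₁ : HasKKMProperty Y T)
    (hb₂ : IsCompact (closure (⋃ y ∈ Y, T y))) :
    ∀ y ∈ Y, ∃ x₀ : X, P x₀ ∩ Q y = ∅ := by
  intro y₀ hy₀
  -- G is a generalized KKM mapping w.r.t. T
  have hgen : IsGenKKM Y T G := by
    intro A hA hAY y hy
    obtain ⟨a₀, ha₀⟩ := hA
    set l := A.toList with hl
    set ys : Fin (A.card + 1) → V := fun i => l.getD i a₀ with hys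
    have hmem : ∀ i, ys i ∈ A := by
      intro i
      simp only [hys]
      rcases lt_or_ge (i : ℕ) l.length with h | h
      · rw [List.getD_eq_getElem l a₀ h]
        have := l.getElem_mem h
        exact Finset.mem_toList.mp this
      · rw [List.getD_eq_default l a₀ h]
        exact ha₀
    have hrange : Set.range ys = (A : Set V) := by
      apply Set.Subset.antisymm
      · rintro x ⟨i, rfl⟩; exact hmem i
      · intro x hx
        have hxl : x ∈ l := by simpa [hl] using hx
        obtain ⟨j, hj, hxj⟩ := List.getElem_of_mem hxl
        have hjlt : j < A.card + 1 := by
          have : l.length = A.card := Finset.length_toList A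
          omega
        refine ⟨⟨j, hjlt⟩, ?_⟩
        simp only [hys]
        rw [List.getD_eq_getElem l a₀ (by simpa using hj)]
        exact hxj
    have h2 : 2 ≤ A.card + 1 := by
      have : 1 ≤ A.card := Finset.card_pos.mpr ⟨a₀, ha₀⟩
      omega
    obtain ⟨i, hi⟩ := ha (A.card + 1) h2 ys (fun i => hAY (hmem i)) y
      (by rwa [hrange])
    intro x hx
    exact Set.mem_biUnion (hmem i) (hi hx)
  have hne : (⋂ y ∈ ({y₀} : Finset V), closure (G y)).Nonempty :=
    hb₁ G hgen {y₀} ⟨y₀, Finset.mem_singleton_self y₀⟩ (by simpa using hy₀)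
  simp only [Finset.mem_singleton, Set.iInter_iInter_eq_left] at hne
  have hGne : (G y₀).Nonempty := by
    by_contra h
    rw [Set.not_nonempty_iff_eq_empty] at h
    rw [h, closure_empty] at hne
    exact hne.ne_empty rfl
  obtain ⟨x₀, hx₀⟩ := hGne
  rw [hG y₀] at hx₀
  exact ⟨x₀, hx₀⟩
end

section
/- Let X be a topological space, Y a convex set in a topological vector space, and Z a topological vector space. Let T ∈ KKM(Y,X) be compact and such that cl(T(A)) is compact for each compact subset A of Y. Let F : X × Z → 2^Z have nonempty values, let Q : Y → 2^Z, and let C : X → 2^Z be such that for each x ∈ X, C(x) is a pointed, closed, convex cone with int C(x) ≠ ∅. Define P : X → 2^Z by P(x) = {z ∈ Z : F(x,z) ⊆ −int C(x)} and G : Y → 2^X by G(y) = {x ∈ X : P(x) ∩ Q(y) = ∅}. Assume T is properly quasi-convex w.r.t. G. Then for each y ∈ Y there exists x* ∈ X such that F(x*,z) ⊄ −int C(x*) for each z ∈ Q(y). -/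
open Set

/-- Theorem 11: existence of solutions of a generalized vector equilibrium
problem. -/
theorem statement10 {X V Z : Type*} [TopologicalSpace X]
    [AddCommGroup V] [Module ℝ V] [TopologicalSpace V]
    [IsTopologicalAddGroup V] [ContinuousSMul ℝ V]
    [AddCommGroup Z] [Module ℝ Z] [TopologicalSpace Z]
    [IsTopologicalAddGroup Z] [ContinuousSMul ℝ Z]
    (Y : Set V) (hYcv : Convex ℝ Y)
    (T : V → Set X)
    (hTkkm : HasKKMProperty Y T)
    (hTcp : IsCompact (closure (⋃ y ∈ Y, T y)))
    (hTA : ∀ A : Set V, A ⊆ Y → IsCompact A →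
      IsCompact (closure (⋃ y ∈ A, T y)))
    (F : X → Z → Set Z) (hFne : ∀ x z, (F x z).Nonempty)
    (Q : V → Set Z)
    -- for each x, C(x) is a pointed closed convex cone with nonempty interior
    (C : X → Set Z)
    (hCcl : ∀ x, IsClosed (C x)) (hCcv : ∀ x, Convex ℝ (C x))
    (hCcone : ∀ x, ∀ a : ℝ, 0 < a → ∀ z ∈ C x, a • z ∈ C x)
    (hCpt : ∀ x, C x ∩ -C x = {0})
    (hCint : ∀ x, (interior (C x)).Nonempty)
    -- P(x) = {z ∈ Z : F(x,z) ⊆ -int C(x)},  G(y) = {x ∈ X : P(x) ∩ Q(y) = ∅}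
    (P : X → Set Z) (hP : ∀ x, P x = {z : Z | F x z ⊆ -interior (C x)})
    (G : V → Set X) (hG : ∀ y, G y = {x : X | P x ∩ Q y = ∅})
    -- T is properly quasi-convex w.r.t. G
    (ha : ∀ n : ℕ, 2 ≤ n → ∀ ys : Fin n → V, (∀ i, ys i ∈ Y) →
      ∀ y ∈ convexHull ℝ (Set.range ys), ∃ i, T y ⊆ G (ys i)) :
    ∀ y ∈ Y, ∃ x : X, ∀ z ∈ Q y, ¬ F x z ⊆ -interior (C x) := by
  intro y hy
  -- G is a generalized KKM mapping w.r.t. T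
  have hGKKM : IsGenKKM Y T G := by
    intro A hA hAY w hw
    obtain ⟨a₀, ha₀⟩ := hA
    set ys : Fin (A.card + 2) → V := fun i => A.toList.getD i a₀ with hys
    have hrange : Set.range ys ⊆ (A : Set V) := by
      rintro v ⟨i, rfl⟩
      by_cases h : (i : ℕ) < A.toList.length
      · have : ys i ∈ A.toList := by
          rw [hys]; simp only
          rw [List.getD_eq_getElem _ _ h]
          exact List.getElem_mem h
        simpa using (Finset.mem_toList.mp this)
      · have : ys i = a₀ := by
          rw [hys]; simp only
          rw [List.getD_eq_default _ _ (not_lt.mp h)]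
        rw [this]; exact ha₀
    have hsub : (A : Set V) ⊆ Set.range ys := by
      intro v hv
      obtain ⟨j, hj, hjv⟩ := List.mem_iff_getElem.mp (Finset.mem_toList.mpr hv)
      have hj2 : j < A.card + 2 := by
        have := hj; rw [Finset.length_toList] at this; omega
      refine ⟨⟨j, hj2⟩, ?_⟩
      rw [hys]; simp only
      rw [List.getD_eq_getElem _ _ (by simpa using hj)]
      exact hjv
    have hYmem : ∀ i, ys i ∈ Y := fun i => hAY (hrange ⟨i, rfl⟩)
    have hw' : w ∈ convexHull ℝ (Set.range ys) :=
      convexHull_mono hsub hw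
    obtain ⟨i, hi⟩ := ha (A.card + 2) (by omega) ys hYmem w hw'
    intro x hx
    exact Set.mem_biUnion (hrange ⟨i, rfl⟩) (hi hx)
  -- Apply KKM property to the singleton {y}
  have hne := hTkkm G hGKKM {y} ⟨y, Finset.mem_singleton_self y⟩
    (by simpa using hy)
  simp only [Finset.mem_singleton, Set.iInter_iInter_eq_left] at hne
  have hGy : (G y).Nonempty := by
    by_contra h
    rw [Set.not_nonempty_iff_eq_empty] at h
    rw [h, closure_empty] at hne
    exact hne.ne_empty rfl
  obtain ⟨x, hx⟩ := hGy
  rw [hG] at hx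
  refine ⟨x, fun z hz hcon => ?_⟩
  have : z ∈ P x ∩ Q y := ⟨by rw [hP]; exact hcon, hz⟩
  rw [hx] at this
  exact this
end
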